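/- arXiv:2601.00153 — 2 statements merged into one kernel-verified Lean document; each statement's English description precedes it below -/
import Mathlib

section
/- Let m ≥ 1 and let r_1, …, r_m be positive integers. Then (∑_{i=1}^m r_i)² ≥ ∑_{i=1}^m (2m+1−2i)·r_i, with equality if and only if r_i = 1 for all i. -/
lemma stmt0_aux (m : ℕ) (r : Fin m → ℤ) (hr : ∀ i, 1 ≤ r i) :
    (∑ i, r i) ^ 2 ≥ ∑ i : Fin m, (2 * (m : ℤ) + 1 - 2 * ((i : ℤ) + 1)) * r i ∧
    ((∑ i, r i) ^ 2 = ∑ i : Fin m, (2 * (m : ℤ) + 1 - 2 * ((i : ℤ) + 1)) * r i ↔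
      ∀ i, r i = 1) := by
  induction m with
  | zero => simp
  | succ m ih =>
    set r' : Fin m → ℤ := fun i => r i.castSucc with hr'def
    have hr' : ∀ i, 1 ≤ r' i := fun i => hr _
    obtain ⟨h1, h2⟩ := ih r' hr'
    set S : ℤ := ∑ i, r' i with hSdef
    set A : ℤ := ∑ i : Fin m, (2 * (m : ℤ) + 1 - 2 * ((i : ℤ) + 1)) * r' i with hAdef
    set a : ℤ := r (Fin.last m) with hadef
    have ha : 1 ≤ a := hr _
    have hS : 0 ≤ S := Finset.sum_nonneg fun i _ => by linarith [hr' i]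
    have hsum : (∑ i, r i) = S + a := by
      rw [Fin.sum_univ_castSucc]
    have hrhs : (∑ i : Fin (m+1), (2 * ((m:ℤ)+1) + 1 - 2 * ((i : ℤ) + 1)) * r i)
        = A + 2 * S + a := by
      rw [Fin.sum_univ_castSucc, hAdef, hSdef, Finset.mul_sum, ← Finset.sum_add_distrib]
      congr 1
      · apply Finset.sum_congr rfl
        intro i _
        simp only [Fin.coe_castSucc, hr'def]
        ring
      · simp [Fin.val_last, hadef]
    have hrhs' : (∑ i : Fin (m+1), (2 * ((m+1:ℕ):ℤ) + 1 - 2 * ((i : ℤ) + 1)) * r i)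
        = A + 2 * S + a := by
      rw [← hrhs]; push_cast; ring
    rw [hsum, hrhs']
    constructor
    · nlinarith [h1, ha, hS]
    · constructor
      · intro heq
        have key : (S ^ 2 - A) + (a - 1) * (2 * S + a) = 0 := by nlinarith [heq]
        have h3 : 0 ≤ (a - 1) * (2 * S + a) := by nlinarith
        have h4 : S ^ 2 = A := by nlinarith [h1]
        have h5 : a = 1 := by nlinarith
        have h6 := h2.mp h4
        intro i
        induction i using Fin.lastCases with
        | last => exact h5
        | cast j => exact h6 j
      · intro hall
        have h4 : S ^ 2 = A := h2.mpr fun i => hall _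
        have h5 : a = 1 := hall _
        rw [h5, ← h4]; ring

/-- Let `m ≥ 1` and let `r 1, …, r m` be positive integers. Then
`(∑ rᵢ)² ≥ ∑ (2m+1−2i)·rᵢ`, with equality iff `rᵢ = 1` for all `i`. -/
theorem stmt0 (m : ℕ) (hm : 1 ≤ m) (r : Fin m → ℤ) (hr : ∀ i, 1 ≤ r i) :
    (∑ i, r i) ^ 2 ≥ ∑ i : Fin m, (2 * (m : ℤ) + 1 - 2 * ((i : ℤ) + 1)) * r i ∧
    ((∑ i, r i) ^ 2 = ∑ i : Fin m, (2 * (m : ℤ) + 1 - 2 * ((i : ℤ) + 1)) * r i ↔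
      ∀ i, r i = 1) := by
  exact stmt0_aux m r hr
end

section
/- Let k be a field and d ≥ 1. The smooth locus of the projective quadric V(xz + y²) ⊂ ℙ^{d+3} (with homogeneous coordinates x, y, z, u₀, …, u_d) is the complement of the linear subspace {x = y = z = 0} ≅ ℙ^d, and on the two affine charts {x ≠ 0} and {z ≠ 0} the induced coordinates (y, u₀,…,u_d) and (−y, u₀,…,u_d) are related over the overlap by (y, u₀,…,u_d) ↦ (1/y, −u₀/y², …, −u_d/y²). -/
/-- For the quadric `V(xz + y²) ⊂ ℙ^{d+3}` with homogeneous coordinates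
`x = w 0`, `y = w 1`, `z = w 2`, `uᵢ = w (3+i)`:
(1) a point of the quadric is singular (all partial derivatives `z, 2y, x` of `xz+y²`
vanish) iff it lies in the linear subspace `{x = y = z = 0} ≅ ℙ^d`; and
(2) over the overlap of the charts `{x ≠ 0}` and `{z ≠ 0}`, the chart coordinates
`(y, u₀,…,u_d)` (normalizing `x = 1`) and `(−y, u₀,…,u_d)` (normalizing `z = 1`) are
related by `(y, u₀,…,u_d) ↦ (1/y, −u₀/y², …, −u_d/y²)`. -/
theorem stmt18 (k : Type*) [Field k] (d : ℕ) (hd : 1 ≤ d)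
    (w : Fin (d + 4) → k) (hw : w ≠ 0)
    (hq : w 0 * w 2 + w 1 ^ 2 = 0) :
    ((w 2 = 0 ∧ 2 * w 1 = 0 ∧ w 0 = 0) ↔ (w 0 = 0 ∧ w 1 = 0 ∧ w 2 = 0)) ∧
    (w 0 ≠ 0 → w 2 ≠ 0 →
      -w 1 / w 2 = (w 1 / w 0)⁻¹ ∧
      ∀ i : Fin (d + 1), w ⟨3 + (i : ℕ), by omega⟩ / w 2 =
        -(w ⟨3 + (i : ℕ), by omega⟩ / w 0) / (w 1 / w 0) ^ 2) := by
  constructor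
  · constructor
    · rintro ⟨h2, _, h0⟩
      refine ⟨h0, ?_, h2⟩
      have : w 1 ^ 2 = 0 := by rw [h0] at hq; simpa using hq
      exact pow_eq_zero_iff (by norm_num) |>.mp this
    · rintro ⟨h0, h1, h2⟩
      exact ⟨h2, by rw [h1]; ring, h0⟩
  · intro h0 h2
    have hy : w 1 ≠ 0 := by
      intro h
      rw [h] at hq
      simp at hq
      rcases hq with h | h <;> [exact h0 h; exact h2 h]
    have hxz : w 0 * w 2 = -(w 1 ^ 2) := by linear_combination hq
    constructor
    · field_simp
      linear_combination -hq
    · intro i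
      field_simp
      linear_combination (w ⟨3 + (i : ℕ), by omega⟩) * hq
end
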